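/- q-analogue of Bailey's transformation (Corollary A.7): for a nonnegative integer m, ∑_{k=0}^{⌊m/2⌋} (D²;q)_{2k} / ( (q²;q²)_k (R;q²)_k ) · q^{k(2k-2)} R^k · (D² q^{2k}/B; q)_{m-2k} / (q;q)_{m-2k} · B^{m-2k} = ∑_{s=0}^{m} (D²;q)_{m-s} (R/q;q²)_{m-s} / ( (q;q)_{m-s} (R/q;q)_{m-s} ) · (1/B;q)_s / (q;q)_s · B^s. -/

import Mathlib

open Finset

noncomputable section

/-- The field of rational functions over `ℚ` in four variables `q`, `B`, `R`, `D`. -/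
abbrev K : Type := FractionRing (MvPolynomial (Fin 4) ℚ)

/-- The formal variable `q`. -/
def q : K := algebraMap (MvPolynomial (Fin 4) ℚ) K (MvPolynomial.X 0)

/-- The formal variable `B`. -/
def B : K := algebraMap (MvPolynomial (Fin 4) ℚ) K (MvPolynomial.X 1)

/-- The formal variable `R`. -/
def R : K := algebraMap (MvPolynomial (Fin 4) ℚ) K (MvPolynomial.X 2)

/-- The formal variable `D`. -/
def D : K := algebraMap (MvPolynomial (Fin 4) ℚ) K (MvPolynomial.X 3)

/-- The q-Pochhammer symbol `(X;Qb)_r = ∏_{j=0}^{r-1} (1 - X Qb^j)`. -/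
def pch (X Qb : K) (r : ℕ) : K := ∏ j ∈ Finset.range r, (1 - X * Qb ^ j)

set_option maxHeartbeats 2000000
section Aux

-- nonzero infrastructure
lemma amap_ne (p : MvPolynomial (Fin 4) ℚ) (v : Fin 4 → ℚ)
    (h : MvPolynomial.eval v p ≠ 0) : algebraMap (MvPolynomial (Fin 4) ℚ) K p ≠ 0 := by
  intro h0
  apply h
  have : p = 0 := by
    have := IsFractionRing.injective (MvPolynomial (Fin 4) ℚ) K
    exact this (by simpa using h0)
  simp [this]

lemma q_ne : (q : K) ≠ 0 := by
  unfold q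
  apply amap_ne _ (fun _ => 1)
  simp

lemma B_ne : (B : K) ≠ 0 := by
  unfold B
  apply amap_ne _ (fun _ => 1)
  simp

lemma one_sub_q_pow_ne (i : ℕ) (hi : 1 ≤ i) : (1 : K) - q ^ i ≠ 0 := by
  have : (1 : K) - q ^ i
      = algebraMap (MvPolynomial (Fin 4) ℚ) K (1 - MvPolynomial.X 0 ^ i) := by
    simp [q, map_sub, map_pow]
  rw [this]
  apply amap_ne _ (fun _ => 2)
  simp only [map_sub, map_pow, map_one, MvPolynomial.eval_X]
  have : (1:ℚ) < 2 ^ i := by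
    calc (1:ℚ) < 2 := by norm_num
    _ ≤ 2 ^ i := by
      exact le_self_pow₀ (by norm_num) (by omega)
  intro h; linarith

lemma one_sub_R_q_pow_ne (i : ℕ) : (1 : K) - R * q ^ i ≠ 0 := by
  have : (1 : K) - R * q ^ i
      = algebraMap (MvPolynomial (Fin 4) ℚ) K (1 - MvPolynomial.X 2 * MvPolynomial.X 0 ^ i) := by
    simp [q, R, map_sub, map_pow, map_mul]
  rw [this]
  apply amap_ne _ ![1, 1, 2, 1]
  simp [MvPolynomial.eval_X]
  norm_num

lemma one_sub_Rdq_ne : (1 : K) - R / q ≠ 0 := by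
  have hq := q_ne
  have : (1 : K) - R / q = (q - R) / q := by field_simp
  rw [this]
  apply div_ne_zero _ hq
  have : (q : K) - R
      = algebraMap (MvPolynomial (Fin 4) ℚ) K (MvPolynomial.X 0 - MvPolynomial.X 2) := by
    simp [q, R, map_sub]
  rw [this]
  apply amap_ne _ ![1, 1, 2, 1]
  simp [MvPolynomial.eval_X]
  norm_num


lemma pch_zero (X Qb : K) : pch X Qb 0 = 1 := by simp [pch]
lemma pch_succ (X Qb : K) (n : ℕ) : pch X Qb (n+1) = pch X Qb n * (1 - X * Qb ^ n) :=
  Finset.prod_range_succ _ _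
lemma pch_add (X Qb : K) (a b : ℕ) : pch X Qb (a+b) = pch X Qb a * pch (X * Qb ^ a) Qb b := by
  rw [pch, Finset.prod_range_add]
  congr 1
  apply Finset.prod_congr rfl
  intro i _
  rw [mul_assoc, ← pow_add]

lemma pch_q_ne (n : ℕ) : pch q q n ≠ 0 := by
  rw [pch]
  apply Finset.prod_ne_zero_iff.mpr
  intro i _
  have : (1:K) - q * q ^ i = 1 - q ^ (i+1) := by ring
  rw [this]; exact one_sub_q_pow_ne _ (by omega)

lemma pch_q2_ne (n : ℕ) : pch (q^2) (q^2) n ≠ 0 := by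
  rw [pch]
  apply Finset.prod_ne_zero_iff.mpr
  intro i _
  have : (1:K) - q^2 * (q^2) ^ i = 1 - q ^ (2*i+2) := by rw [← pow_mul]; ring_nf
  rw [this]; exact one_sub_q_pow_ne _ (by omega)

lemma pch_R_q2_ne (n : ℕ) : pch R (q^2) n ≠ 0 := by
  rw [pch]
  apply Finset.prod_ne_zero_iff.mpr
  intro i _
  have : (1:K) - R * (q^2) ^ i = 1 - R * q ^ (2*i) := by rw [← pow_mul]
  rw [this]; exact one_sub_R_q_pow_ne _

lemma pch_Rdq_q_ne (n : ℕ) : pch (R/q) q n ≠ 0 := by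
  rw [pch]
  apply Finset.prod_ne_zero_iff.mpr
  intro i _
  match i with
  | 0 => simpa using one_sub_Rdq_ne
  | (j+1) =>
    have : (1:K) - R/q * q ^ (j+1) = 1 - R * q ^ j := by
      have hq := q_ne
      field_simp
      ring
    rw [this]; exact one_sub_R_q_pow_ne _

/-- Gaussian binomial as ratio, 0 for j > n. -/
def qb (n j : ℕ) : K := if j ≤ n then pch q q n / (pch q q j * pch q q (n - j)) else 0

lemma qb_self (n : ℕ) : qb n n = 1 := by
  rw [qb, if_pos le_rfl]
  simp [pch_zero]
  exact pch_q_ne n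

lemma qb_zero (n : ℕ) : qb n 0 = 1 := by
  rw [qb, if_pos (Nat.zero_le n)]
  simp [pch_zero]
  exact pch_q_ne n

lemma pch_q_succ' (n : ℕ) : pch q q (n+1) = pch q q n * (1 - q ^ (n+1)) := by
  rw [pch_succ]; ring_nf

lemma qb_pascal (n j : ℕ) (hj : j ≤ n) :
    qb (n+1) (j+1) = qb n (j+1) + q ^ (n - j) * qb n j := by
  rcases Nat.lt_or_ge j n with h | h
  · -- j + 1 ≤ n
    have h1 : j + 1 ≤ n := h
    rw [qb, if_pos (by omega), qb, if_pos h1, qb, if_pos hj]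
    have e1 : pch q q (n+1) = pch q q n * (1 - q^(n+1)) := pch_q_succ' n
    have e2 : n + 1 - (j+1) = n - j := by omega
    have e3 : pch q q (n - j) = pch q q (n - j - 1) * (1 - q ^ (n-j)) := by
      have h5 : n - j = (n - j - 1) + 1 := by omega
      calc pch q q (n - j) = pch q q ((n-j-1)+1) := by rw [← h5]
        _ = pch q q (n-j-1) * (1 - q ^ ((n-j-1)+1)) := pch_q_succ' _
        _ = pch q q (n-j-1) * (1 - q ^ (n-j)) := by rw [← h5]
    have e4 : n - (j+1) = n - j - 1 := by omega
    have e5 : pch q q (j+1) = pch q q j * (1 - q^(j+1)) := pch_q_succ' j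
    rw [e1, e2, e4, e3, e5]
    have hq1 : (1:K) - q^(j+1) ≠ 0 := one_sub_q_pow_ne _ (by omega)
    have hq2 : (1:K) - q^(n-j) ≠ 0 := one_sub_q_pow_ne _ (by omega)
    have hp1 := pch_q_ne j
    have hp2 := pch_q_ne (n - j - 1)
    have key : (1:K) - q^(n+1) = (1 - q^(n-j)) + q^(n-j) * (1 - q^(j+1)) := by
      have : q^(n-j) * q^(j+1) = q^(n+1) := by
        rw [← pow_add]; congr 1; omega
      rw [← this]; ring
    field_simp
    rw [key]; ring
  · -- j = n
    have hjn : j = n := by omega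
    subst hjn
    rw [qb_self, qb, if_neg (by omega), Nat.sub_self, pow_zero, qb_self]
    ring

lemma qvd (a b : K) (n : ℕ) :
    pch (a * b) q n
      = ∑ j ∈ Finset.range (n+1), qb n j * a ^ j * pch b q j * pch a q (n - j) := by
  induction n with
  | zero => simp [pch_zero, qb_zero]
  | succ n ih =>
    rw [pch_succ, ih, Finset.sum_mul]
    have expand : ∀ j ∈ Finset.range (n+1),
        qb n j * a ^ j * pch b q j * pch a q (n - j) * (1 - a * b * q ^ n)
        = (qb n j * a ^ j * pch b q j * pch a q (n + 1 - j))
          + (q ^ (n-j) * qb n j * a ^ (j+1) * pch b q (j+1) * pch a q (n - j)) := by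
      intro j hj
      simp only [Finset.mem_range] at hj
      have hjn : j ≤ n := by omega
      have f1 : pch a q (n + 1 - j) = pch a q (n - j) * (1 - a * q ^ (n - j)) := by
        have : n + 1 - j = (n - j) + 1 := by omega
        rw [this, pch_succ]
      have f2 : pch b q (j+1) = pch b q j * (1 - b * q ^ j) := pch_succ _ _ _
      rw [f1, f2]
      have key : (1:K) - a * b * q ^ n
          = (1 - a * q ^ (n-j)) + q^(n-j) * a * (1 - b * q ^ j) := by
        have : q^(n-j) * q^j = q^n := by rw [← pow_add]; congr 1; omega
        rw [← this]; ring
      rw [key]; ring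
    rw [Finset.sum_congr rfl expand, Finset.sum_add_distrib]
    -- RHS: split off j = 0 via sum_range_succ'
    rw [Finset.sum_range_succ' (fun j => qb (n+1) j * a ^ j * pch b q j * pch a q (n + 1 - j)) (n+1)]
    have pas : ∀ j ∈ Finset.range (n+1),
        qb (n+1) (j+1) * a ^ (j+1) * pch b q (j+1) * pch a q (n + 1 - (j+1))
        = qb n (j+1) * a ^ (j+1) * pch b q (j+1) * pch a q (n + 1 - (j+1))
          + q ^ (n-j) * qb n j * a ^ (j+1) * pch b q (j+1) * pch a q (n - j) := by
      intro j hj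
      simp only [Finset.mem_range] at hj
      rw [qb_pascal n j (by omega)]
      have e : n + 1 - (j+1) = n - j := by omega
      rw [e]; ring
    rw [Finset.sum_congr rfl pas, Finset.sum_add_distrib]
    have shift : (∑ j ∈ Finset.range (n+1),
          qb n (j+1) * a ^ (j+1) * pch b q (j+1) * pch a q (n + 1 - (j+1)))
        + qb n 0 * a ^ 0 * pch b q 0 * pch a q (n + 1 - 0)
        = ∑ j ∈ Finset.range (n+2), qb n j * a ^ j * pch b q j * pch a q (n + 1 - j) :=
      (Finset.sum_range_succ' (fun j => qb n j * a ^ j * pch b q j * pch a q (n + 1 - j)) (n+1)).symm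
    have top : ∑ j ∈ Finset.range (n+2), qb n j * a ^ j * pch b q j * pch a q (n + 1 - j)
        = ∑ j ∈ Finset.range (n+1), qb n j * a ^ j * pch b q j * pch a q (n + 1 - j) := by
      rw [Finset.sum_range_succ]
      have : qb n (n+1) = 0 := by rw [qb, if_neg (by omega)]
      rw [this]
      simp
    have comb : (∑ j ∈ Finset.range (n+1),
          qb n (j+1) * a ^ (j+1) * pch b q (j+1) * pch a q (n + 1 - (j+1)))
        = ∑ j ∈ Finset.range (n+1), qb n j * a ^ j * pch b q j * pch a q (n + 1 - j)
          - qb n 0 * a ^ 0 * pch b q 0 * pch a q (n + 1 - 0) := by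
      rw [← top, ← shift]; ring
    rw [comb]
    simp only [qb_zero]
    ring

def tIn (n k : ℕ) : K :=
  q ^ (2*k*k - 2*k) * R ^ k /
    (pch (q^2) (q^2) k * pch R (q^2) k * pch q q (n - 2*k))

def gIn (n k : ℕ) : K :=
  q ^ (n+1) * (1 - q ^ (2*k)) * (R * q ^ (2*k) - q^2) / q ^ (2*k+2) * tIn (n+1) k

lemma gIn_zero (n : ℕ) : gIn n 0 = 0 := by
  simp [gIn]

lemma tIn_expo (k : ℕ) : 2*(k+1)*(k+1) - 2*(k+1) = (2*k*k - 2*k) + 4*k := by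
  have h1 : 2*k ≤ 2*k*k + 2*k := by omega
  have h2 : 2*k ≤ 2*k*k ∨ k = 0 := by
    rcases Nat.eq_zero_or_pos k with h|h
    · right; exact h
    · left; nlinarith
  rcases h2 with h|h
  · zify [h, show 2*(k+1) ≤ 2*(k+1)*(k+1) by nlinarith]
    ring
  · subst h; rfl

lemma hstep (n k : ℕ) (hk : 2*k + 2 ≤ n + 1) :
    (1 - q^(n+1)) * (1 - R * q^(n-1)) * tIn (n+1) k - (1 - R * q^(2*n-1)) * tIn n k
      = gIn n (k+1) - gIn n k := by
  obtain ⟨d, rfl⟩ : ∃ d, n = d + 2*k + 1 := ⟨n - 2*k - 1, by omega⟩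
  simp only [gIn, tIn]
  rw [show d + 2*k + 1 + 1 - 2*k = d + 2 from by omega,
      show d + 2*k + 1 - 2*k = d + 1 from by omega,
      show d + 2*k + 1 + 1 - 2*(k+1) = d from by omega,
      show d + 2*k + 1 - 1 = d + 2*k from by omega,
      show 2*(d + 2*k + 1) - 1 = 2*d + 4*k + 1 from by omega,
      tIn_expo k]
  rw [show (d + 2 : ℕ) = (d+1)+1 from rfl, pch_q_succ' (d+1), pch_q_succ' d]
  rw [pch_succ (q^2) (q^2) k, pch_succ R (q^2) k]
  rw [show (q:K)^(d+2*k+1+1) = q^d*q^(2*k)*q^2 from by ring,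
      show (q:K)^(d+2*k) = q^d*q^(2*k) from by ring,
      show (q:K)^(2*d+4*k+1) = q^d*q^d*q^(2*k)*q^(2*k)*q from by ring,
      show (q:K)^(2*k+2) = q^(2*k)*q^2 from by ring,
      show (q:K)^(2*k*k-2*k+4*k) = q^(2*k*k-2*k)*q^(2*k)*q^(2*k) from by ring,
      show ((q:K)^2)^k = q^(2*k) from by ring,
      show (q:K)^(2*(k+1)) = q^(2*k)*q^2 from by ring,
      show (q:K)^(2*(k+1)+2) = q^(2*k)*q^2*q^2 from by ring,
      show (R:K)^(k+1) = R^k*R from pow_succ R k,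
      show (q:K)^(d+1) = q^d*q from by ring,
      show (q:K)^(d+1+1) = q^d*q^2 from by ring]
  have hq : (q:K) ≠ 0 := q_ne
  have he : pch q q d ≠ 0 := pch_q_ne d
  have hp2 : pch (q^2) (q^2) k ≠ 0 := pch_q2_ne k
  have hpr : pch R (q^2) k ≠ 0 := pch_R_q2_ne k
  have ha : (q:K)^d ≠ 0 := pow_ne_zero _ hq
  have hy : (q:K)^(2*k) ≠ 0 := pow_ne_zero _ hq
  have h4 : (1:K) - q^d*q ≠ 0 := by
    have := one_sub_q_pow_ne (d+1) (by omega)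
    rwa [show (q:K)^(d+1) = q^d*q from by ring] at this
  have h5 : (1:K) - q^d*q^2 ≠ 0 := by
    have := one_sub_q_pow_ne (d+2) (by omega)
    rwa [show (q:K)^(d+2) = q^d*q^2 from by ring] at this
  have h6 : (1:K) - q^2*q^(2*k) ≠ 0 := by
    have := one_sub_q_pow_ne (2*k+2) (by omega)
    rwa [show (q:K)^(2*k+2) = q^2*q^(2*k) from by ring] at this
  have h7 : (1:K) - R*q^(2*k) ≠ 0 := one_sub_R_q_pow_ne (2*k)
  generalize hg1 : (q:K)^d = a at h4 h5 ha ⊢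
  generalize hg2 : (q:K)^(2*k) = y at h6 h7 hy ⊢
  generalize hg3 : (q:K)^(2*k*k-2*k) = w
  generalize hg4 : (R:K)^k = rk
  generalize hg5 : pch q q d = e at he ⊢
  generalize hg6 : pch (q^2) (q^2) k = p2 at hp2 ⊢
  generalize hg7 : pch R (q^2) k = pr at hpr ⊢
  simp only [div_mul_div_comm, ← mul_div_assoc, div_mul_eq_mul_div, div_div]
  have hD1 : p2 * pr * (e * (1 - a * q) * (1 - a * q ^ 2)) ≠ 0 := by
    exact mul_ne_zero (mul_ne_zero hp2 hpr) (mul_ne_zero (mul_ne_zero he h4) h5)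
  have hD2 : p2 * pr * (e * (1 - a * q)) ≠ 0 :=
    mul_ne_zero (mul_ne_zero hp2 hpr) (mul_ne_zero he h4)
  have hD3 : y * q ^ 2 * q ^ 2 * (p2 * (1 - q ^ 2 * y) * (pr * (1 - R * y)) * e) ≠ 0 := by
    apply mul_ne_zero
    · exact mul_ne_zero (mul_ne_zero hy (pow_ne_zero _ hq)) (pow_ne_zero _ hq)
    · exact mul_ne_zero (mul_ne_zero (mul_ne_zero hp2 h6) (mul_ne_zero hpr h7)) he
  have hD4 : y * q ^ 2 * (p2 * pr * (e * (1 - a * q) * (1 - a * q ^ 2))) ≠ 0 :=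
    mul_ne_zero (mul_ne_zero hy (pow_ne_zero _ hq)) hD1
  rw [div_sub_div _ _ hD1 hD2, div_sub_div _ _ hD3 hD4, div_eq_div_iff (mul_ne_zero hD1 hD2) (mul_ne_zero hD3 hD4)]
  ring


lemma pch_q_one : pch q q 1 = 1 - q := by simp [pch]

lemma bnd_even (p : ℕ) (hp : 1 ≤ p) :
    (1 - q^(2*p+1)) * (1 - R * q^(2*p-1)) * tIn (2*p+1) p
      - (1 - R * q^(2*(2*p)-1)) * tIn (2*p) p = - gIn (2*p) p := by
  obtain ⟨t, rfl⟩ : ∃ t, p = t + 1 := ⟨p - 1, by omega⟩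
  simp only [gIn, tIn]
  rw [show 2*(t+1)+1-2*(t+1) = 1 from by omega,
      show 2*(t+1)-2*(t+1) = 0 from by omega,
      show 2*(t+1)-1 = 2*t+1 from by omega,
      show 2*(2*(t+1))-1 = 4*t+3 from by omega]
  rw [pch_zero, pch_q_one]
  rw [show (q:K)^(2*(t+1)+1) = q^(2*t)*q^3 from by ring,
      show (q:K)^(2*t+1) = q^(2*t)*q from by ring,
      show (q:K)^(4*t+3) = q^(2*t)*q^(2*t)*q^3 from by ring,
      show (q:K)^(2*(t+1)) = q^(2*t)*q^2 from by ring,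
      show (q:K)^(2*(t+1)+2) = q^(2*t)*q^4 from by ring]
  have hq : (q:K) ≠ 0 := q_ne
  have h1 : (1:K) - q ≠ 0 := by
    have := one_sub_q_pow_ne 1 (by omega); rwa [pow_one] at this
  have hp2 : pch (q^2) (q^2) (t+1) ≠ 0 := pch_q2_ne _
  have hpr : pch R (q^2) (t+1) ≠ 0 := pch_R_q2_ne _
  have hz : (q:K)^(2*t) ≠ 0 := pow_ne_zero _ hq
  generalize hg1 : (q:K)^(2*t) = z at hz ⊢
  generalize hg2 : (q:K)^(2*(t+1)*(t+1)-2*(t+1)) = w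
  generalize hg3 : (R:K)^(t+1) = rk
  generalize hg4 : pch (q^2) (q^2) (t+1) = p2 at hp2 ⊢
  generalize hg5 : pch R (q^2) (t+1) = pr at hpr ⊢
  simp only [div_mul_div_comm, ← mul_div_assoc, div_mul_eq_mul_div, div_div, mul_one]
  have hD1 : p2 * pr * (1 - q) ≠ 0 := mul_ne_zero (mul_ne_zero hp2 hpr) h1
  have hD2 : p2 * pr ≠ 0 := mul_ne_zero hp2 hpr
  have hD3 : z * q^4 * (p2 * pr * (1 - q)) ≠ 0 := by
    exact mul_ne_zero (mul_ne_zero hz (pow_ne_zero _ hq)) hD1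
  rw [div_sub_div _ _ hD1 hD2, neg_div', div_eq_div_iff (mul_ne_zero hD1 hD2) hD3]
  ring

lemma bnd_odd (p : ℕ) :
    (1 - q^(2*p+1+1)) * (1 - R * q^(2*p+1-1)) * tIn (2*p+1+1) (p+1)
      = - gIn (2*p+1) (p+1) := by
  simp only [gIn, tIn]
  rw [show 2*p+1+1-2*(p+1) = 0 from by omega,
      show 2*p+1-1 = 2*p from by omega,
      show 2*p+1+1 = 2*p+2 from by omega]
  rw [pch_zero]
  rw [show (q:K)^(2*p+2) = q^(2*p)*q^2 from by ring,
      show (q:K)^(2*(p+1)) = q^(2*p)*q^2 from by ring,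
      show (q:K)^(2*(p+1)+2) = q^(2*p)*q^4 from by ring]
  have hq : (q:K) ≠ 0 := q_ne
  have hp2 : pch (q^2) (q^2) (p+1) ≠ 0 := pch_q2_ne _
  have hpr : pch R (q^2) (p+1) ≠ 0 := pch_R_q2_ne _
  have hz : (q:K)^(2*p) ≠ 0 := pow_ne_zero _ hq
  generalize hg1 : (q:K)^(2*p) = z at hz ⊢
  generalize hg2 : (q:K)^(2*(p+1)*(p+1)-2*(p+1)) = w
  generalize hg3 : (R:K)^(p+1) = rk
  generalize hg4 : pch (q^2) (q^2) (p+1) = p2 at hp2 ⊢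
  generalize hg5 : pch R (q^2) (p+1) = pr at hpr ⊢
  simp only [div_mul_div_comm, ← mul_div_assoc, div_mul_eq_mul_div, div_div, mul_one]
  have hD2 : p2 * pr ≠ 0 := mul_ne_zero hp2 hpr
  have hD3 : z * q^4 * (p2 * pr) ≠ 0 :=
    mul_ne_zero (mul_ne_zero hz (pow_ne_zero _ hq)) hD2
  rw [neg_div', div_eq_div_iff hD2 hD3]
  ring

def fIn (n : ℕ) : K := ∑ k ∈ Finset.range (n/2 + 1), tIn n k

lemma keySum (n : ℕ) (hn : 1 ≤ n) :
    (1 - q^(n+1)) * (1 - R * q^(n-1)) * fIn (n+1) = (1 - R * q^(2*n-1)) * fIn n := by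
  rw [← sub_eq_zero]
  unfold fIn
  rw [Finset.mul_sum, Finset.mul_sum]
  obtain ⟨p, hp | hp⟩ := Nat.even_or_odd' n
  · -- n = 2p, p ≥ 1
    subst hp
    have hp1 : 1 ≤ p := by omega
    rw [show (2*p+1)/2 + 1 = p + 1 from by omega, show (2*p)/2 + 1 = p + 1 from by omega]
    rw [← Finset.sum_sub_distrib]
    rw [Finset.sum_range_succ]
    have hmid : ∀ k ∈ Finset.range p,
        (1 - q^(2*p+1)) * (1 - R * q^(2*p-1)) * tIn (2*p+1) k
          - (1 - R * q^(2*(2*p)-1)) * tIn (2*p) k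
        = gIn (2*p) (k+1) - gIn (2*p) k := by
      intro k hk
      simp only [Finset.mem_range] at hk
      exact hstep (2*p) k (by omega)
    rw [Finset.sum_congr rfl hmid, Finset.sum_range_sub (gIn (2*p)), bnd_even p hp1, gIn_zero]
    ring
  · -- n = 2p+1
    subst hp
    rw [show (2*p+1+1)/2 + 1 = p + 2 from by omega, show (2*p+1)/2 + 1 = p + 1 from by omega]
    rw [Finset.sum_range_succ _ (p+1)]
    rw [show (∑ k ∈ Finset.range (p+1), (1 - q^(2*p+1+1)) * (1 - R * q^(2*p+1-1)) * tIn (2*p+1+1) k)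
          + (1 - q^(2*p+1+1)) * (1 - R * q^(2*p+1-1)) * tIn (2*p+1+1) (p+1)
          - (∑ k ∈ Finset.range (p+1), (1 - R * q^(2*(2*p+1)-1)) * tIn (2*p+1) k)
        = (∑ k ∈ Finset.range (p+1),
            ((1 - q^(2*p+1+1)) * (1 - R * q^(2*p+1-1)) * tIn (2*p+1+1) k
              - (1 - R * q^(2*(2*p+1)-1)) * tIn (2*p+1) k))
          + (1 - q^(2*p+1+1)) * (1 - R * q^(2*p+1-1)) * tIn (2*p+1+1) (p+1) from by
      rw [Finset.sum_sub_distrib]; ring]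
    have hmid : ∀ k ∈ Finset.range (p+1),
        (1 - q^(2*p+1+1)) * (1 - R * q^(2*p+1-1)) * tIn (2*p+1+1) k
          - (1 - R * q^(2*(2*p+1)-1)) * tIn (2*p+1) k
        = gIn (2*p+1) (k+1) - gIn (2*p+1) k := by
      intro k hk
      simp only [Finset.mem_range] at hk
      exact hstep (2*p+1) k (by omega)
    rw [Finset.sum_congr rfl hmid, Finset.sum_range_sub (gIn (2*p+1)), bnd_odd p, gIn_zero]
    ring

lemma innerId (n : ℕ) :
    fIn n = pch (R/q) (q^2) n / (pch q q n * pch (R/q) q n) := by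
  induction n with
  | zero => simp [fIn, tIn, pch_zero]
  | succ n ih =>
    rcases Nat.eq_zero_or_pos n with rfl | hn
    · -- n+1 = 1
      have h1 : pch (R/q) (q^2) 1 = 1 - R/q := by simp [pch]
      have h2 : pch (R/q) q 1 = 1 - R/q := by simp [pch]
      have h3 : fIn 1 = 1 / pch q q 1 := by
        simp [fIn, tIn, pch_zero]
      rw [h1, h2, h3, mul_comm (pch q q (0+1)) (1 - R/q), ← div_div,
          div_self one_sub_Rdq_ne]
    · -- step
      obtain ⟨m, rfl⟩ : ∃ m, n = m + 1 := ⟨n - 1, by omega⟩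
      have hA1 : (1:K) - q^(m+1+1) ≠ 0 := one_sub_q_pow_ne _ (by omega)
      have hA2 : (1:K) - R * q^(m+1-1) ≠ 0 := one_sub_R_q_pow_ne _
      have key := keySum (m+1) (by omega)
      rw [ih] at key
      have keyH : (1 - q^(m+1+1)) * (1 - R * q^(m+1-1))
            * (pch (R/q) (q^2) (m+1+1) / (pch q q (m+1+1) * pch (R/q) q (m+1+1)))
          = (1 - R * q^(2*(m+1)-1))
            * (pch (R/q) (q^2) (m+1) / (pch q q (m+1) * pch (R/q) q (m+1))) := by
        rw [pch_succ (R/q) (q^2) (m+1), pch_succ (R/q) q (m+1), pch_q_succ' (m+1)]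
        rw [show 2*(m+1)-1 = 2*m+1 from by omega, show m+1-1 = m from by omega]
        have e1 : (R:K)/q * (q^2)^(m+1) = R * q^(2*m+1) := by
          rw [show ((q:K)^2)^(m+1) = q^(2*m+1) * q from by ring]
          field_simp [q_ne]
        have e2 : (R:K)/q * q^(m+1) = R * q^m := by
          rw [show (q:K)^(m+1) = q^m * q from by ring]
          field_simp [q_ne]
        rw [e1, e2]
        have hE : pch q q (m+1) ≠ 0 := pch_q_ne _
        have hP3 : pch (R/q) q (m+1) ≠ 0 := pch_Rdq_q_ne _
        have hA1' : (1:K) - q^(m+1+1) ≠ 0 := hA1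
        have hA2' : (1:K) - R*q^m ≠ 0 := one_sub_R_q_pow_ne _
        field_simp
      rw [show m+1-1 = m from by omega] at key hA2
      rw [show m+1-1 = m from by omega] at keyH
      have := key.trans keyH.symm
      exact mul_left_cancel₀ (mul_ne_zero hA1 hA2) this

lemma zpow_to_pow (k : ℕ) :
    (q:K) ^ ((k : ℤ) * (2 * (k : ℤ) - 2)) = q ^ (2*k*k - 2*k) := by
  cases k with
  | zero => norm_num
  | succ t =>
    have h1 : 2*(t+1)*(t+1) - 2*(t+1) = 2*t*t + 2*t := by
      zify [show 2*(t+1) ≤ 2*(t+1)*(t+1) by nlinarith]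
      ring
    rw [h1]
    have h2 : ((t+1 : ℕ) : ℤ) * (2 * ((t+1 : ℕ) : ℤ) - 2) = ((2*t*t + 2*t : ℕ) : ℤ) := by
      push_cast; ring
    rw [h2, zpow_natCast]

def FF (m k s : ℕ) : K :=
  pch (D^2) q (2*k) / (pch (q^2) (q^2) k * pch R (q^2) k) * q^(2*k*k-2*k) * R^k *
    (pch (D^2*q^(2*k)) q (m-2*k-s) / pch q q (m-2*k-s)) *
    (pch B⁻¹ q s / pch q q s) * B^s

lemma swapSum (m : ℕ) (F : ℕ → ℕ → K) :
    ∑ k ∈ Finset.range (m/2+1), ∑ s ∈ Finset.range (m-2*k+1), F k s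
      = ∑ s ∈ Finset.range (m+1), ∑ k ∈ Finset.range ((m-s)/2+1), F k s := by
  rw [Finset.sum_sigma', Finset.sum_sigma']
  apply Finset.sum_nbij' (fun p => (⟨p.2, p.1⟩ : (_ : ℕ) × ℕ))
    (fun p => (⟨p.2, p.1⟩ : (_ : ℕ) × ℕ))
  · intro a ha
    simp only [Finset.mem_sigma, Finset.mem_range] at ha ⊢
    omega
  · intro a ha
    simp only [Finset.mem_sigma, Finset.mem_range] at ha ⊢
    omega
  · intro a _; rfl
  · intro a _; rfl
  · intro a _; rfl

end Aux

/-- q-analogue of Bailey's transformation: for a nonnegative integer `m`,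
`∑_{k=0}^{⌊m/2⌋} (D²;q)_{2k}/((q²;q²)_k (R;q²)_k) q^{k(2k-2)} R^k
    (D²q^{2k}/B;q)_{m-2k}/(q;q)_{m-2k} B^{m-2k}
 = ∑_{s=0}^{m} (D²;q)_{m-s} (R/q;q²)_{m-s} / ((q;q)_{m-s} (R/q;q)_{m-s})
    (1/B;q)_s/(q;q)_s B^s`. -/
theorem q_bailey_transformation (m : ℕ) :
    ∑ k ∈ Finset.range (m / 2 + 1),
        pch (D ^ 2) q (2 * k) / (pch (q ^ 2) (q ^ 2) k * pch R (q ^ 2) k) *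
          q ^ ((k : ℤ) * (2 * (k : ℤ) - 2)) * R ^ k *
          (pch (D ^ 2 * q ^ (2 * k) / B) q (m - 2 * k) / pch q q (m - 2 * k)) *
          B ^ (m - 2 * k) =
      ∑ s ∈ Finset.range (m + 1),
        pch (D ^ 2) q (m - s) / pch q q (m - s) *
          (pch (R / q) (q ^ 2) (m - s) / pch (R / q) q (m - s)) *
          (pch B⁻¹ q s / pch q q s) * B ^ s := by
  have step1 : ∀ k ∈ Finset.range (m/2+1),
      pch (D ^ 2) q (2 * k) / (pch (q ^ 2) (q ^ 2) k * pch R (q ^ 2) k) *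
          q ^ ((k : ℤ) * (2 * (k : ℤ) - 2)) * R ^ k *
          (pch (D ^ 2 * q ^ (2 * k) / B) q (m - 2 * k) / pch q q (m - 2 * k)) *
          B ^ (m - 2 * k)
        = ∑ s ∈ Finset.range (m - 2*k + 1), FF m k s := by
    intro k hk
    simp only [Finset.mem_range] at hk
    have hk2 : 2*k ≤ m := by omega
    rw [zpow_to_pow k]
    rw [show (D:K)^2*q^(2*k)/B = B⁻¹*(D^2*q^(2*k)) from by ring]
    rw [qvd B⁻¹ (D^2*q^(2*k)) (m-2*k)]
    rw [← Finset.sum_range_reflect]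
    rw [Finset.sum_div, Finset.mul_sum, Finset.sum_mul]
    apply Finset.sum_congr rfl
    intro s hs
    simp only [Finset.mem_range] at hs
    have hsN : s ≤ m - 2*k := by omega
    rw [show m-2*k+1-1-s = m-2*k-s from by omega]
    rw [show m-2*k-(m-2*k-s) = s from by omega]
    simp only [qb]
    rw [if_pos (show m-2*k-s ≤ m-2*k from by omega)]
    rw [show m-2*k-(m-2*k-s) = s from by omega]
    rw [show (B:K)^(m-2*k) = B^(m-2*k-s) * B^s from by
          rw [← pow_add]; congr 1; omega]
    rw [inv_pow]
    unfold FF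
    have h1 : pch q q (m-2*k) ≠ 0 := pch_q_ne _
    have h2 : pch q q (m-2*k-s) ≠ 0 := pch_q_ne _
    have h3 : pch q q s ≠ 0 := pch_q_ne _
    have h4 : (B:K)^(m-2*k-s) ≠ 0 := pow_ne_zero _ B_ne
    have h5 : pch (q^2) (q^2) k ≠ 0 := pch_q2_ne _
    have h6 : pch R (q^2) k ≠ 0 := pch_R_q2_ne _
    simp only [← one_div]
    generalize hp1 : pch (D^2) q (2*k) = pd
    generalize hp2 : pch (D^2*q^(2*k)) q (m-2*k-s) = P
    generalize hp3 : pch (1/B) q s = Q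
    generalize hp4 : pch q q (m-2*k-s) = e1 at h2 ⊢
    generalize hp5 : pch q q s = es at h3 ⊢
    generalize hp6 : pch q q (m-2*k) = eN at h1 ⊢
    generalize hp7 : (B:K)^(m-2*k-s) = b1 at h4 ⊢
    generalize hp8 : (B:K)^s = b2
    generalize hp9 : pch (q^2) (q^2) k = p2 at h5 ⊢
    generalize hp10 : pch R (q^2) k = pr at h6 ⊢
    generalize hp11 : (q:K)^(2*k*k-2*k) = w
    generalize hp12 : (R:K)^k = rk
    simp only [div_mul_div_comm, ← mul_div_assoc, div_mul_eq_mul_div, div_div,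
      mul_one, one_mul]
    rw [div_eq_div_iff
      (mul_ne_zero (mul_ne_zero h5 h6) (mul_ne_zero (mul_ne_zero (mul_ne_zero h2 h3) h4) h1))
      (mul_ne_zero (mul_ne_zero (mul_ne_zero h5 h6) h2) h3)]
    ring
  rw [Finset.sum_congr rfl step1, swapSum m (FF m)]
  apply Finset.sum_congr rfl
  intro s hs
  simp only [Finset.mem_range] at hs
  have hsm : s ≤ m := by omega
  have hterm : ∀ k ∈ Finset.range ((m-s)/2+1),
      FF m k s = pch (D^2) q (m-s) * tIn (m-s) k * (pch B⁻¹ q s / pch q q s * B^s) := by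
    intro k hk
    simp only [Finset.mem_range] at hk
    have hk2 : 2*k ≤ m - s := by omega
    obtain ⟨j, hj⟩ : ∃ j, m - s - 2*k = j := ⟨_, rfl⟩
    have hms : m - s = 2*k + j := by omega
    unfold FF tIn
    rw [show m - 2*k - s = j from by omega, hms,
        show 2*k + j - 2*k = j from by omega,
        pch_add (D^2) q (2*k) j]
    ring
  rw [Finset.sum_congr rfl hterm, ← Finset.sum_mul, ← Finset.mul_sum]
  have : ∑ k ∈ Finset.range ((m-s)/2+1), tIn (m-s) k = fIn (m-s) := rfl
  rw [this, innerId (m-s)]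
  ring

end
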